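/- Let g be a nonzero nonnegative quasi-homogeneous polynomial of degree d ≥ 2 in variables z ∈ ℝ₊^{n+1}, let p ≥ d+1, and define g̃(z, z_{n+2}) = z_{n+2}^{p−d}·g(z). Then μ_p(g̃) = α_{d,p}·μ_p(g), where μ_p denotes the maximum over the respective nonnegative ℓ_p unit balls and α_{d,p} = max_{t∈[0,1]} t^{p−d}(1−t^p)^{d/p} = (1−d/p)^{(p−d)/p}(d/p)^{d/p}. -/

import Mathlib

private lemma gm2_aux {a b u : ℝ} (ha : 0 < a) (hb : 0 < b) (hab : a + b = 1)
    (hu : 0 ≤ u) (hu1 : u ≤ 1) : u ^ a * (1 - u) ^ b ≤ a ^ a * b ^ b := by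
  have h1u : 0 ≤ 1 - u := by linarith
  have key : (u / a) ^ a * ((1 - u) / b) ^ b ≤ 1 := by
    calc (u / a) ^ a * ((1 - u) / b) ^ b
        ≤ a * (u / a) + b * ((1 - u) / b) :=
          Real.geom_mean_le_arith_mean2_weighted ha.le hb.le
            (div_nonneg hu ha.le) (div_nonneg h1u hb.le) hab
      _ = 1 := by field_simp; ring
  have e1 : u ^ a = a ^ a * (u / a) ^ a := by
    rw [← Real.mul_rpow ha.le (div_nonneg hu ha.le)]
    congr 1
    field_simp
  have e2 : (1 - u) ^ b = b ^ b * ((1 - u) / b) ^ b := by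
    rw [← Real.mul_rpow hb.le (div_nonneg h1u hb.le)]
    congr 1
    field_simp
  calc u ^ a * (1 - u) ^ b
      = (a ^ a * b ^ b) * ((u / a) ^ a * ((1 - u) / b) ^ b) := by rw [e1, e2]; ring
    _ ≤ (a ^ a * b ^ b) * 1 := by
        apply mul_le_mul_of_nonneg_left key
        positivity
    _ = a ^ a * b ^ b := mul_one _

theorem stmt19 {n : ℕ} (d p : ℝ) (hd : 2 ≤ d) (hp : d + 1 ≤ p)
    (g : (Fin (n + 1) → ℝ) → ℝ)
    (hgcont : ContinuousOn g {z | ∀ i, 0 ≤ z i})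
    (hgnonneg : ∀ z : Fin (n + 1) → ℝ, (∀ i, 0 ≤ z i) → 0 ≤ g z)
    (hghom : ∀ t : ℝ, 0 ≤ t → ∀ z : Fin (n + 1) → ℝ, (∀ i, 0 ≤ z i) →
      g (t • z) = t ^ d * g z)
    (hgne : ∃ z : Fin (n + 1) → ℝ, (∀ i, 0 ≤ z i) ∧ g z ≠ 0)
    (μ : ℝ)
    (hμ : IsGreatest {t | ∃ z : Fin (n + 1) → ℝ,
      (∀ i, 0 ≤ z i) ∧ (∑ i, z i ^ p) ^ (1 / p) ≤ 1 ∧ t = g z} μ)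
    (μt : ℝ)
    (hμt : IsGreatest {t | ∃ z : Fin (n + 1) → ℝ, ∃ s : ℝ,
      (∀ i, 0 ≤ z i) ∧ 0 ≤ s ∧ ((∑ i, z i ^ p) + s ^ p) ^ (1 / p) ≤ 1 ∧
        t = s ^ (p - d) * g z} μt)
    (α : ℝ)
    (hα : IsGreatest
      {u | ∃ t ∈ Set.Icc (0 : ℝ) 1, u = t ^ (p - d) * (1 - t ^ p) ^ (d / p)} α) :
    μt = α * μ ∧ α = (1 - d / p) ^ ((p - d) / p) * (d / p) ^ (d / p) := by
  have hd0 : (0:ℝ) < d := by linarith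
  have hp0 : (0:ℝ) < p := by linarith
  have hpd : (0:ℝ) < p - d := by linarith
  have hp0' : p ≠ 0 := hp0.ne'
  -- basic rpow cancellation
  have pow_unfold : ∀ X : ℝ, 0 ≤ X → (X ^ (1/p)) ^ p = X := by
    intro X hX
    rw [← Real.rpow_mul hX, one_div, inv_mul_cancel₀ hp0', Real.rpow_one]
  -- g 0 = 0
  have hg0 : g 0 = 0 := by
    have h := hghom 0 le_rfl 0 (fun i => le_rfl)
    rw [smul_zero, Real.zero_rpow hd0.ne', zero_mul] at h
    exact h
  -- μ ≥ 0
  have hμ0 : 0 ≤ μ := by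
    apply hμ.2
    refine ⟨0, fun i => le_rfl, ?_, hg0.symm⟩
    have e : (∑ i : Fin (n+1), (0 : Fin (n+1) → ℝ) i ^ p) = 0 := by
      simp [Real.zero_rpow hp0']
    rw [e, Real.zero_rpow (one_div_ne_zero hp0')]
    exact zero_le_one
  -- α ≥ 0
  have hα0 : 0 ≤ α := by
    apply hα.2
    exact ⟨0, ⟨le_rfl, zero_le_one⟩, by rw [Real.zero_rpow hpd.ne', zero_mul]⟩
  -- abbreviations for the formula
  set a : ℝ := (p - d) / p with ha_def
  set b : ℝ := d / p with hb_def
  have ha : 0 < a := div_pos hpd hp0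
  have hb : 0 < b := div_pos hd0 hp0
  have hab : a + b = 1 := by rw [ha_def, hb_def]; field_simp; ring
  have h1b : 1 - d / p = a := by rw [ha_def]; field_simp
  -- closed form for α
  have hAgr : IsGreatest
      {u | ∃ t ∈ Set.Icc (0 : ℝ) 1, u = t ^ (p - d) * (1 - t ^ p) ^ (d / p)}
      (a ^ a * b ^ b) := by
    constructor
    · refine ⟨a ^ (1/p), ⟨Real.rpow_nonneg ha.le _,
        Real.rpow_le_one ha.le ?_ (by positivity)⟩, ?_⟩
      · rw [ha_def, div_le_one hp0]; linarith
      · rw [pow_unfold a ha.le]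
        have e1 : (a ^ (1/p)) ^ (p - d) = a ^ a := by
          rw [← Real.rpow_mul ha.le]
          congr 1
          rw [ha_def]; ring
        have e2 : 1 - a = b := by linarith
        rw [e1, e2]
    · rintro x ⟨t, ⟨ht0, ht1⟩, rfl⟩
      have hu : 0 ≤ t ^ p := Real.rpow_nonneg ht0 p
      have hu1 : t ^ p ≤ 1 := Real.rpow_le_one ht0 ht1 hp0.le
      have e1 : t ^ (p - d) = (t ^ p) ^ a := by
        rw [← Real.rpow_mul ht0]
        congr 1
        rw [ha_def]; field_simp
      rw [e1]
      exact gm2_aux ha hb hab hu hu1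
  have hαA : α = a ^ a * b ^ b := hα.unique hAgr
  -- second goal
  have goal2 : α = (1 - d / p) ^ ((p - d) / p) * (d / p) ^ (d / p) := by
    rw [hαA, h1b]
  refine ⟨?_, goal2⟩
  -- first goal: μt = α * μ
  apply le_antisymm
  · -- μt ≤ α * μ
    obtain ⟨z, s, hz, hs0, hcon, heq⟩ := hμt.1
    set S : ℝ := ∑ i, z i ^ p with hS_def
    have hS0 : 0 ≤ S := Finset.sum_nonneg fun i _ => Real.rpow_nonneg (hz i) p
    have hsp0 : 0 ≤ s ^ p := Real.rpow_nonneg hs0 p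
    have hsum1 : S + s ^ p ≤ 1 := by
      have h := Real.rpow_le_rpow (Real.rpow_nonneg (by positivity) _) hcon hp0.le
      rwa [pow_unfold _ (by positivity), Real.one_rpow] at h
    have hsp1 : s ^ p ≤ 1 := by linarith
    have hs1 : s ≤ 1 := by
      by_contra h
      push_neg at h
      have : (1:ℝ) ^ p < s ^ p := Real.rpow_lt_rpow zero_le_one h hp0
      rw [Real.one_rpow] at this
      linarith
    have hαs : s ^ (p - d) * (1 - s ^ p) ^ (d / p) ≤ α :=
      hα.2 ⟨s, ⟨hs0, hs1⟩, rfl⟩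
    rw [heq]
    rcases eq_or_lt_of_le hS0 with hSz | hSpos
    · -- S = 0 : all z i = 0, g z = 0
      have hzall : z = 0 := by
        funext i
        show z i = 0
        have hterm : z i ^ p = 0 :=
          (Finset.sum_eq_zero_iff_of_nonneg
            (fun j _ => Real.rpow_nonneg (hz j) p)).mp hSz.symm i (Finset.mem_univ i)
        by_contra hne
        have hzi : 0 < z i := lt_of_le_of_ne (hz i) (Ne.symm hne)
        have := Real.rpow_pos_of_pos hzi p
        rw [hterm] at this
        exact lt_irrefl 0 this
      rw [hzall, hg0, mul_zero]
      positivity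
    · -- S > 0 : rescale
      set r : ℝ := S ^ (1/p) with hr_def
      have hr0 : 0 < r := Real.rpow_pos_of_pos hSpos _
      have hrp : r ^ p = S := pow_unfold S hS0
      set z' : Fin (n+1) → ℝ := r⁻¹ • z with hz'_def
      have hz' : ∀ i, 0 ≤ z' i := fun i =>
        mul_nonneg (inv_nonneg.mpr hr0.le) (hz i)
      have hsum' : ∑ i, z' i ^ p = 1 := by
        have : ∀ i, z' i ^ p = (r ^ p)⁻¹ * z i ^ p := by
          intro i
          show (r⁻¹ * z i) ^ p = _
          rw [Real.mul_rpow (inv_nonneg.mpr hr0.le) (hz i),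
            Real.inv_rpow hr0.le]
        rw [Finset.sum_congr rfl (fun i _ => this i), ← Finset.mul_sum, hrp,
          ← hS_def, inv_mul_cancel₀ hSpos.ne']
      have hgz' : g z' ≤ μ := by
        apply hμ.2
        exact ⟨z', hz', by rw [hsum', Real.one_rpow], rfl⟩
      have hgz'0 : 0 ≤ g z' := hgnonneg z' hz'
      have hzrz' : z = r • z' := by
        rw [hz'_def, smul_smul, mul_inv_cancel₀ hr0.ne', one_smul]
      have hgz : g z = r ^ d * g z' := by
        rw [hzrz']
        exact hghom r hr0.le z' hz'
      have hrd : r ^ d ≤ (1 - s ^ p) ^ (d / p) := by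
        have hrd' : r ^ d = S ^ (d/p) := by
          rw [hr_def, ← Real.rpow_mul hS0]
          congr 1
          field_simp
        rw [hrd']
        exact Real.rpow_le_rpow hS0 (by linarith) (by positivity)
      have hspd : 0 ≤ s ^ (p - d) := Real.rpow_nonneg hs0 _
      calc s ^ (p - d) * g z = (s ^ (p - d) * r ^ d) * g z' := by rw [hgz]; ring
        _ ≤ α * μ := by
            apply mul_le_mul _ hgz' hgz'0 hα0
            calc s ^ (p - d) * r ^ d ≤ s ^ (p - d) * (1 - s ^ p) ^ (d / p) :=
                  mul_le_mul_of_nonneg_left hrd hspd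
              _ ≤ α := hαs
  · -- α * μ ≤ μt
    obtain ⟨z0, hz0, hcon0, hμeq⟩ := hμ.1
    obtain ⟨t0, ⟨ht00, ht01⟩, hαeq⟩ := hα.1
    have ht0p : t0 ^ p ≤ 1 := Real.rpow_le_one ht00 ht01 hp0.le
    have ht0p0 : 0 ≤ t0 ^ p := Real.rpow_nonneg ht00 p
    have hc0 : 0 ≤ 1 - t0 ^ p := by linarith
    set c : ℝ := (1 - t0 ^ p) ^ (1/p) with hc_def
    have hcnn : 0 ≤ c := Real.rpow_nonneg hc0 _
    have hcp : c ^ p = 1 - t0 ^ p := pow_unfold _ hc0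
    have hS00 : 0 ≤ ∑ i, z0 i ^ p :=
      Finset.sum_nonneg fun i _ => Real.rpow_nonneg (hz0 i) p
    have hS01 : ∑ i, z0 i ^ p ≤ 1 := by
      have h := Real.rpow_le_rpow (Real.rpow_nonneg hS00 _) hcon0 hp0.le
      rwa [pow_unfold _ hS00, Real.one_rpow] at h
    apply hμt.2
    refine ⟨c • z0, t0, fun i => mul_nonneg hcnn (hz0 i), ht00, ?_, ?_⟩
    · -- constraint
      have hsum : ∑ i, (c • z0) i ^ p = (1 - t0 ^ p) * ∑ i, z0 i ^ p := by
        rw [Finset.mul_sum]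
        apply Finset.sum_congr rfl
        intro i _
        show (c * z0 i) ^ p = _
        rw [Real.mul_rpow hcnn (hz0 i), hcp]
      rw [hsum]
      apply Real.rpow_le_one (by positivity) _ (by positivity)
      nlinarith [mul_le_mul_of_nonneg_left hS01 hc0]
    · -- value
      have hgc : g (c • z0) = c ^ d * g z0 := hghom c hcnn z0 hz0
      have hcd : c ^ d = (1 - t0 ^ p) ^ (d / p) := by
        rw [hc_def, ← Real.rpow_mul hc0]
        congr 1
        field_simp
      rw [hgc, hcd, ← hμeq, hαeq]
      ring
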